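/- Increment control by the triple norm: for a symmetric positive semidefinite bilinear form s and any sequence (p^n), for every ε > 0, ∑_{n=2}^{N−1} s(δp^{n+1}, δp^{n+1}) ≤ (ε/2)∑_{n=2}^{N−1}|p^{n+1}|_s² + ε^{−1}(|δp^N|_s² + ∑_{n=3}^{N−1}|δδp^{n+1}|_s²) + (1+ε^{−1})|p²|_s². -/

import Mathlib

open Finset

private lemma young_aux {H : Type*} [AddCommGroup H] [Module ℝ H]
    (s : LinearMap.BilinForm ℝ H)
    (hsym : ∀ x y, s x y = s y x) (hpsd : ∀ x, 0 ≤ s x x)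
    (a b : H) (t : ℝ) (ht : 0 < t) :
    s a b ≤ t/2 * s a a + 1/(2*t) * s b b := by
  have h := hpsd (t • a - b)
  have expand : s (t • a - b) (t • a - b)
      = t^2 * s a a - 2*t*(s a b) + s b b := by
    simp only [map_sub, map_smul, LinearMap.sub_apply, LinearMap.smul_apply,
      smul_eq_mul]
    rw [hsym b a]; ring
  rw [expand] at h
  calc s a b ≤ (t^2 * s a a + s b b)/(2*t) := by
        rw [le_div_iff₀ (by positivity)]; nlinarith
    _ = t/2 * s a a + 1/(2*t) * s b b := by field_simp

private lemma abel_aux {H : Type*} [AddCommGroup H] [Module ℝ H]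
    (s : LinearMap.BilinForm ℝ H) (p : ℕ → H) :
    ∀ M : ℕ, ∑ n ∈ Finset.Icc 2 (M+3), s (p (n+1) - p n) (p (n+1) - p n)
      = s (p (M+4) - p (M+3)) (p (M+4)) - s (p 3 - p 2) (p 2)
        - ∑ n ∈ Finset.Icc 3 (M+3), s ((p (n+1) - p n) - (p n - p (n-1))) (p n) := by
  intro M
  induction M with
  | zero =>
      rw [show (0+3) = 2+1 from rfl, Finset.sum_Icc_succ_top (by norm_num),
        Finset.Icc_self, Finset.sum_singleton, Finset.Icc_self, Finset.sum_singleton]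
      simp only [show (2:ℕ)+1 = 3 from rfl, show (3:ℕ)-1 = 2 from rfl,
        show (3:ℕ)+1 = 4 from rfl, show (0:ℕ)+4 = 4 from rfl,
        map_sub, LinearMap.sub_apply]
      ring
  | succ M ih =>
      rw [show (M+1+3) = (M+3)+1 from rfl,
        Finset.sum_Icc_succ_top (by omega : 2 ≤ (M+3)+1),
        Finset.sum_Icc_succ_top (by omega : 3 ≤ (M+3)+1), ih]
      simp only [show M+3+1 = M+4 from rfl, show M+4-1 = M+3 from rfl,
        show M+4+1 = M+1+4 from rfl, show M+1+3 = M+4 from rfl]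
      simp only [map_sub, LinearMap.sub_apply]
      ring

private lemma reindex_aux (f : ℕ → ℝ) (M : ℕ) :
    ∑ n ∈ Finset.Icc 2 (M+3), f (n+1) = ∑ n ∈ Finset.Icc 3 (M+4), f n := by
  induction M with
  | zero =>
      rw [show (0+3) = 2+1 from rfl, Finset.sum_Icc_succ_top (by norm_num),
        Finset.Icc_self, Finset.sum_singleton,
        show (0+4) = 3+1 from rfl, Finset.sum_Icc_succ_top (by norm_num),
        Finset.Icc_self, Finset.sum_singleton]
  | succ M ih =>
      rw [show (M+1+3) = (M+3)+1 from rfl,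
        Finset.sum_Icc_succ_top (by omega : 2 ≤ (M+3)+1),
        show (M+1+4) = (M+4)+1 from rfl,
        Finset.sum_Icc_succ_top (by omega : 3 ≤ (M+4)+1), ih]

/-- Increment control by the triple norm (Lemma 4.3 without the time-step factor). -/
theorem increment_control
    {H : Type*} [AddCommGroup H] [Module ℝ H]
    (s : LinearMap.BilinForm ℝ H)
    (hsym : ∀ x y, s x y = s y x)
    (hpsd : ∀ x, 0 ≤ s x x)
    (p : ℕ → H) (N : ℕ) (hN : 4 ≤ N) :
    ∀ ε : ℝ, 0 < ε →
    ∑ n ∈ Finset.Icc 2 (N-1), s (p (n+1) - p n) (p (n+1) - p n)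
      ≤ (ε/2) * ∑ n ∈ Finset.Icc 2 (N-1), s (p (n+1)) (p (n+1))
        + ε⁻¹ * (s (p N - p (N-1)) (p N - p (N-1))
            + ∑ n ∈ Finset.Icc 3 (N-1),
                s ((p (n+1) - p n) - (p n - p (n-1))) ((p (n+1) - p n) - (p n - p (n-1))))
        + (1 + ε⁻¹) * s (p 2) (p 2) := by
  intro ε hε
  obtain ⟨M, rfl⟩ : ∃ M, N = M + 4 := ⟨N - 4, by omega⟩
  simp only [show M + 4 - 1 = M + 3 from rfl]
  have key : ∀ a b : H, s a b ≤ ε/4 * s a a + ε⁻¹ * s b b := by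
    intro a b
    have h := young_aux s hsym hpsd a b (ε/2) (by positivity)
    have h1 : (ε/2)/2 = ε/4 := by ring
    have h2 : 1/(2*(ε/2)) = ε⁻¹ := by field_simp
    rw [h1, h2] at h; exact h
  rw [abel_aux s p M]
  -- pieces
  set P4 := s (p (M+4)) (p (M+4)) with hP4def
  set P3 := s (p 3) (p 3) with hP3def
  set P2 := s (p 2) (p 2) with hP2def
  set Q := s (p (M+4) - p (M+3)) (p (M+4) - p (M+3)) with hQdef
  set S3 := ∑ n ∈ Finset.Icc 3 (M+3), s (p n) (p n) with hS3def
  set D := ∑ n ∈ Finset.Icc 3 (M+3),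
      s ((p (n+1) - p n) - (p n - p (n-1))) ((p (n+1) - p n) - (p n - p (n-1))) with hDdef
  have hA : s (p (M+4) - p (M+3)) (p (M+4)) ≤ ε/4 * P4 + ε⁻¹ * Q := by
    have := key (p (M+4)) (p (M+4) - p (M+3))
    rw [hsym] at this; exact this
  have hB : -s (p 3 - p 2) (p 2) ≤ ε/4 * P3 + ε⁻¹ * P2 + P2 := by
    have h := key (p 3) (-(p 2))
    simp only [map_neg, LinearMap.neg_apply, neg_neg] at h
    have hexp : -s (p 3 - p 2) (p 2) = -(s (p 3) (p 2)) + P2 := by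
      simp only [map_sub, LinearMap.sub_apply, hP2def]; ring
    rw [hexp]; linarith
  have hC : -∑ n ∈ Finset.Icc 3 (M+3),
      s ((p (n+1) - p n) - (p n - p (n-1))) (p n) ≤ ε⁻¹ * D + ε/4 * S3 := by
    rw [← Finset.sum_neg_distrib]
    have hle : ∀ n ∈ Finset.Icc 3 (M+3),
        -s ((p (n+1) - p n) - (p n - p (n-1))) (p n)
          ≤ ε⁻¹ * s ((p (n+1) - p n) - (p n - p (n-1)))
              ((p (n+1) - p n) - (p n - p (n-1))) + ε/4 * s (p n) (p n) := by
      intro n _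
      have h := key (p n) (-((p (n+1) - p n) - (p n - p (n-1))))
      simp only [map_neg, LinearMap.neg_apply, neg_neg] at h
      rw [hsym] at h
      linarith
    calc _ ≤ ∑ n ∈ Finset.Icc 3 (M+3),
          (ε⁻¹ * s ((p (n+1) - p n) - (p n - p (n-1)))
              ((p (n+1) - p n) - (p n - p (n-1))) + ε/4 * s (p n) (p n)) :=
        Finset.sum_le_sum hle
      _ = ε⁻¹ * D + ε/4 * S3 := by
        rw [Finset.sum_add_distrib, ← Finset.mul_sum, ← Finset.mul_sum]
  have hsum : ∑ n ∈ Finset.Icc 2 (M+3), s (p (n+1)) (p (n+1)) = S3 + P4 := by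
    rw [reindex_aux (fun n => s (p n) (p n)) M, hS3def,
      show M+4 = (M+3)+1 from rfl, Finset.sum_Icc_succ_top (by omega : 3 ≤ (M+3)+1)]
  have hP3S3 : P3 ≤ S3 :=
    Finset.single_le_sum (f := fun n => s (p n) (p n))
      (fun i _ => hpsd (p i)) (by simp)
  have hP4nn : (0:ℝ) ≤ P4 := hpsd _
  rw [hsum]
  have hm1 : ε * P3 ≤ ε * S3 := mul_le_mul_of_nonneg_left hP3S3 hε.le
  have hm2 : (0:ℝ) ≤ ε * P4 := mul_nonneg hε.le hP4nn
  linarith [hA, hB, hC]
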